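/- Let H be a compact second countable group, L < H a closed subgroup, and Γ < L a dense subgroup. If D ⊂ H is a Borel set of positive Haar measure that is balanced with respect to some Dirac sequence, then m_H(ΓD) = m_H(LD). -/

import Mathlib

open MeasureTheory Filter Set
open scoped Pointwise symmDiff Topology ENNReal

/-- Let `H` be a compact second countable group, `L` a closed subgroup and `Γ ≤ L` a
dense subgroup of `L`. If `D ⊆ H` is a Borel set of positive Haar measure that is
balanced with respect to some Dirac sequence, then `m_H(ΓD) = m_H(LD)`. -/
theorem haar_smul_dense_subgroup_eq {H : Type*} [Group H] [TopologicalSpace H]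
    [IsTopologicalGroup H] [CompactSpace H] [SecondCountableTopology H]
    [MeasurableSpace H] [BorelSpace H]
    (μ : Measure H) [μ.IsHaarMeasure] [IsProbabilityMeasure μ]
    (L : Subgroup H) (hL : IsClosed (L : Set H))
    (Γ : Subgroup H) (hΓL : Γ ≤ L) (hΓdense : (L : Set H) ⊆ closure (Γ : Set H))
    (D : Set H) (hD : MeasurableSet D) (hDpos : 0 < μ D)
    (hbal : ∃ B : ℕ → Set H, (∀ j, IsClosed (B j)) ∧ Antitone B ∧ (⋂ j, B j = {1}) ∧
      (∀ j, 0 < μ (B j)) ∧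
      ∀ s ∈ D, Tendsto (fun j => (μ (D ∩ s • B j)).toReal / (μ (B j)).toReal)
        atTop (nhds 1)) :
    μ ((Γ : Set H) * D) = μ ((L : Set H) * D) := by
  classical
  haveI hRI : μ.IsMulRightInvariant := by
    constructor
    intro g
    haveI : IsProbabilityMeasure (Measure.map (· * g) μ) :=
      Measure.isProbabilityMeasure_map (measurable_mul_const g).aemeasurable
    exact Measure.isHaarMeasure_eq_of_isProbabilityMeasure _ μ
  obtain ⟨B, hBcl, hBanti, hBinter, hBpos, hBbal⟩ := hbal
  set Q : Set H := (Γ : Set H) * D with hQdef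
  set E : Set H := toMeasurable μ Q with hEdef
  have hEm : MeasurableSet E := measurableSet_toMeasurable μ Q
  have hQE : Q ⊆ E := subset_toMeasurable μ Q
  have hμE : μ E = μ Q := measure_toMeasurable Q
  have hDQ : D ⊆ Q := fun d hd => ⟨1, Γ.one_mem, d, hd, one_mul d⟩
  -- translation continuity
  have hpre : ∀ a : H, (fun x => a⁻¹ * x) ⁻¹' E = a • E := by
    intro a; ext x
    simp [Set.mem_smul_set_iff_inv_smul_mem, smul_eq_mul]
  have contL : Tendsto (fun g : H => μ ((g • E) ∆ E)) (𝓝 1) (𝓝 0) := by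
    have hfam : Continuous (fun g : H => ContinuousMap.mk (fun x => g⁻¹ * x)
        (by fun_prop)) :=
      (ContinuousMap.curry (ContinuousMap.mk (fun p : H × H => p.1⁻¹ * p.2)
        (by fun_prop))).continuous
    have := tendsto_measure_symmDiff_preimage_nhds_zero (μ := μ) (ν := μ)
      (l := 𝓝 (1:H)) (f := fun g : H => ContinuousMap.mk (fun x => g⁻¹ * x) (by fun_prop))
      (g := ContinuousMap.mk (fun x => (1:H)⁻¹ * x) (by fun_prop))
      (hfam.tendsto 1)
      (Eventually.of_forall fun a => measurePreserving_mul_left μ a⁻¹)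
      (measurePreserving_mul_left μ 1⁻¹) hEm.nullMeasurableSet (measure_ne_top μ E)
    simpa [hpre] using this
  have contR : Tendsto (fun g : H => μ (((· * g) ⁻¹' E) ∆ E)) (𝓝 1) (𝓝 0) := by
    have hfam : Continuous (fun g : H => ContinuousMap.mk (fun x => x * g)
        (by fun_prop)) :=
      (ContinuousMap.curry (ContinuousMap.mk (fun p : H × H => p.2 * p.1)
        (by fun_prop))).continuous
    have := tendsto_measure_symmDiff_preimage_nhds_zero (μ := μ) (ν := μ)
      (l := 𝓝 (1:H)) (f := fun g : H => ContinuousMap.mk (fun x => x * g) (by fun_prop))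
      (g := ContinuousMap.mk (fun x => x * (1:H)) (by fun_prop))
      (hfam.tendsto 1)
      (Eventually.of_forall fun a => measurePreserving_mul_right μ a)
      (measurePreserving_mul_right μ 1) hEm.nullMeasurableSet (measure_ne_top μ E)
    simpa using this
  -- Γ-a.e. invariance of E
  have hΓinv : ∀ γ ∈ Γ, μ ((γ • E) ∆ E) = 0 := by
    intro γ hγ
    have hmeas : MeasurableSet (γ • E) := hEm.const_smul γ
    have hsm : μ (γ • E) = μ E := MeasureTheory.measure_smul (μ := μ) γ E
    have hQsub : Q ⊆ γ • E := by
      have h1 : γ • Q = Q := by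
        rw [hQdef, ← smul_mul_assoc, smul_coe_set hγ]
      calc Q = γ • Q := h1.symm
      _ ⊆ γ • E := smul_set_mono hQE
    have hint : μ (E ∩ (γ • E)) = μ E :=
      le_antisymm (measure_mono inter_subset_left)
        (by rw [hμE]; exact measure_mono (subset_inter hQE hQsub))
    have hint' : μ ((γ • E) ∩ E) = μ E := by rwa [Set.inter_comm]
    have hd1 : μ (E \ (γ • E)) = 0 := by
      have h := measure_inter_add_diff (μ := μ) E hmeas
      rw [hint] at h
      exact (ENNReal.add_right_inj (measure_ne_top μ E)).mp (by simpa using h)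
    have hd2 : μ ((γ • E) \ E) = 0 := by
      have h := measure_inter_add_diff (μ := μ) (γ • E) hEm
      rw [hint', hsm] at h
      exact (ENNReal.add_right_inj (measure_ne_top μ E)).mp (by simpa using h)
    refine le_antisymm ?_ zero_le
    rw [Set.symmDiff_def]
    exact le_trans (measure_union_le _ _) (by simp [hd1, hd2])
  -- L-a.e. invariance of E
  have hLinv : ∀ l ∈ L, μ ((l • E) ∆ E) = 0 := by
    intro l hl
    refine le_antisymm (ENNReal.le_of_forall_pos_le_add fun ε hε _ => ?_) zero_le
    rw [zero_add]
    have h1 : ∀ᶠ g in 𝓝 (1:H), μ ((g • E) ∆ E) ≤ ε :=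
      ENNReal.tendsto_nhds_zero.mp contL ε (by exact_mod_cast hε)
    have hc : Tendsto (fun g : H => g⁻¹ * l) (𝓝 l) (𝓝 1) := by
      have hcont : Continuous fun g : H => g⁻¹ * l := by fun_prop
      simpa using hcont.tendsto l
    have h2 : ∀ᶠ g in 𝓝 l, μ (((g⁻¹ * l) • E) ∆ E) ≤ ε := hc.eventually h1
    have hlc := hΓdense hl
    rw [mem_closure_iff_nhds] at hlc
    obtain ⟨γ, hγnb, hγΓ⟩ := hlc _ h2
    calc μ ((l • E) ∆ E) ≤ μ ((l • E) ∆ (γ • E)) + μ ((γ • E) ∆ E) :=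
          measure_symmDiff_le _ _ _
    _ ≤ ε + 0 := by
        refine add_le_add ?_ (le_of_eq (hΓinv γ hγΓ))
        have heq : (l • E) ∆ (γ • E) = γ • (((γ⁻¹ * l) • E) ∆ E) := by
          rw [Set.smul_set_symmDiff, smul_smul, mul_inv_cancel_left]
        rw [heq, MeasureTheory.measure_smul (μ := μ)]
        exact hγnb
    _ = ε := add_zero _
  -- B j eventually inside any neighborhood of 1
  have hBsub : ∀ V ∈ 𝓝 (1:H), ∃ j0 : ℕ, ∀ j ≥ j0, B j ⊆ V := by
    intro V hV
    obtain ⟨U, hUV, hUo, hU1⟩ := mem_nhds_iff.mp hV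
    have hex : ∃ j, B j ⊆ U := by
      by_contra hcon
      push_neg at hcon
      have hne : ∀ j, (B j \ U).Nonempty := fun j =>
        Set.not_subset.mp (hcon j) |>.imp fun x hx => ⟨hx.1, hx.2⟩
      have hcl : ∀ j, IsClosed (B j \ U) := fun j => (hBcl j).sdiff hUo
      obtain ⟨x, hx⟩ := IsCompact.nonempty_iInter_of_sequence_nonempty_isCompact_isClosed
        (fun j => B j \ U)
        (fun j => Set.diff_subset_diff_left (hBanti (Nat.le_succ j))) hne
        ((hcl 0).isCompact) hcl
      have hx1 : x ∈ ⋂ j, B j := mem_iInter.mpr fun j => ((mem_iInter.mp hx) j).1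
      rw [hBinter] at hx1
      exact ((mem_iInter.mp hx) 0).2 (by rw [mem_singleton_iff.mp hx1]; exact hU1)
    obtain ⟨j0, hj0⟩ := hex
    exact ⟨j0, fun j hj => ((hBanti hj).trans hj0).trans hUV⟩
  -- lower bound at points of L * D
  have hlow : ∀ s ∈ D, ∀ l ∈ L, ∀ᶠ j in atTop,
      μ (B j) / 2 ≤ μ (((l * s) • B j) ∩ E) := by
    intro s hs l hl
    have hinv : μ ((l⁻¹ • E) ∆ E) = 0 := hLinv l⁻¹ (inv_mem hl)
    have hae : l⁻¹ • E =ᵐ[μ] E := by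
      rwa [← measure_symmDiff_eq_zero_iff]
    filter_upwards [(hBbal s hs).eventually (lt_mem_nhds (by norm_num : (1:ℝ)/2 < 1))]
      with j hj
    have hBfin : μ (B j) ≠ ⊤ := measure_ne_top μ _
    have hBt : 0 < (μ (B j)).toReal := ENNReal.toReal_pos (hBpos j).ne' hBfin
    have h1 : (μ (B j)).toReal / 2 ≤ (μ (D ∩ s • B j)).toReal := by
      rw [lt_div_iff₀ hBt] at hj
      nlinarith
    have h2 : μ (B j) / 2 ≤ μ (D ∩ s • B j) := by
      rw [← ENNReal.toReal_le_toReal (ENNReal.div_lt_top hBfin (by norm_num)).ne (measure_ne_top μ _)]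
      rw [ENNReal.toReal_div]
      simpa using h1
    calc μ (B j) / 2 ≤ μ (D ∩ s • B j) := h2
    _ ≤ μ ((s • B j) ∩ E) := measure_mono fun x hx => ⟨hx.2, hQE (hDQ hx.1)⟩
    _ = μ ((s • B j) ∩ l⁻¹ • E) := (measure_congr (ae_eq_set_inter (ae_eq_refl _) hae.symm))
    _ = μ (l • ((s • B j) ∩ l⁻¹ • E)) := (MeasureTheory.measure_smul (μ := μ) l _).symm
    _ = μ (((l * s) • B j) ∩ E) := by
        rw [Set.smul_set_inter, smul_inv_smul, smul_smul]
  -- the exceptional set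
  set S : Set H := ((L : Set H) * D) \ E with hSdef
  set A : Set H := toMeasurable μ S \ E with hAdef
  have hAm : MeasurableSet A := (measurableSet_toMeasurable μ S).diff hEm
  have hSA : S ⊆ A := fun x hx => ⟨subset_toMeasurable μ S hx, hx.2⟩
  have hAdis : Disjoint A E := Set.disjoint_sdiff_left
  -- the key Markov estimate
  have hmain : ∀ (j : ℕ) (ε : ℝ≥0∞), (∀ b ∈ B j, μ (((· * b) ⁻¹' E) ∆ E) ≤ ε) →
      μ (B j) / 2 * μ {h | h ∈ A ∧ μ (B j) / 2 ≤ μ ((h • B j) ∩ E)} ≤ ε * μ (B j) := by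
    intro j ε hεb
    set W : Set (H × H) := {p : H × H | p.1 ∈ A ∧ (p.2 ∈ B j ∧ p.1 * p.2 ∈ E)} with hW
    have hWm : MeasurableSet W := by
      have h1 : MeasurableSet {p : H × H | p.1 ∈ A} := hAm.preimage measurable_fst
      have h2 : MeasurableSet {p : H × H | p.2 ∈ B j} :=
        (hBcl j).measurableSet.preimage measurable_snd
      have h3 : MeasurableSet {p : H × H | p.1 * p.2 ∈ E} :=
        hEm.preimage (measurable_fst.mul measurable_snd)
      exact h1.inter (h2.inter h3)
    have hF : ∀ h : H, μ (Prod.mk h ⁻¹' W) = A.indicator (fun h => μ ((h • B j) ∩ E)) h := by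
      intro h
      by_cases hh : h ∈ A
      · rw [Set.indicator_of_mem hh]
        have hpW : Prod.mk h ⁻¹' W = B j ∩ (fun x => h * x) ⁻¹' E := by
          ext b; simp [hW, hh]
        rw [hpW]
        have hsm : (h • B j) ∩ E = h • (B j ∩ (fun x => h * x) ⁻¹' E) := by
          rw [Set.smul_set_inter]
          congr 1
          ext x
          simp [Set.mem_smul_set_iff_inv_smul_mem, smul_eq_mul]
        rw [hsm, MeasureTheory.measure_smul (μ := μ)]
      · rw [Set.indicator_of_notMem hh]
        have hpW : Prod.mk h ⁻¹' W = ∅ := by ext b; simp [hW, hh]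
        rw [hpW, measure_empty]
    have hprod2 : (μ.prod μ) W ≤ ε * μ (B j) := by
      rw [Measure.prod_apply_symm hWm]
      calc ∫⁻ b, μ ((fun h => (h, b)) ⁻¹' W) ∂μ
          ≤ ∫⁻ b, (B j).indicator (fun _ => ε) b ∂μ := by
            apply lintegral_mono
            intro b
            by_cases hb : b ∈ B j
            · rw [Set.indicator_of_mem hb]
              have hsub : (fun h => (h, b)) ⁻¹' W ⊆ ((· * b) ⁻¹' E) \ E := by
                intro h hh
                exact ⟨hh.2.2, fun hhE => (hAdis.ne_of_mem hh.1 hhE) rfl⟩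
              refine le_trans (measure_mono hsub) (le_trans (measure_mono ?_) (hεb b hb))
              rw [Set.symmDiff_def]
              exact subset_union_left
            · have : (fun h => (h, b)) ⁻¹' W = ∅ := by ext h; simp [hW, hb]
              simp [this, hb]
        _ = ε * μ (B j) := by
            rw [lintegral_indicator (hBcl j).measurableSet]
            simp [mul_comm]
    have hmeasF : Measurable fun h => μ (Prod.mk h ⁻¹' W) :=
      measurable_measure_prodMk_left hWm
    have hset : {h | h ∈ A ∧ μ (B j) / 2 ≤ μ ((h • B j) ∩ E)} ⊆
        {h | μ (B j) / 2 ≤ μ (Prod.mk h ⁻¹' W)} := by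
      rintro h ⟨h1, h2⟩
      show μ (B j) / 2 ≤ μ (Prod.mk h ⁻¹' W)
      rw [hF h, Set.indicator_of_mem h1]
      exact h2
    calc μ (B j) / 2 * μ {h | h ∈ A ∧ μ (B j) / 2 ≤ μ ((h • B j) ∩ E)}
        ≤ μ (B j) / 2 * μ {h | μ (B j) / 2 ≤ μ (Prod.mk h ⁻¹' W)} :=
          mul_le_mul_right (measure_mono hset) _
      _ ≤ ∫⁻ h, μ (Prod.mk h ⁻¹' W) ∂μ := mul_meas_ge_le_lintegral₀ hmeasF.aemeasurable _
      _ = (μ.prod μ) W := (Measure.prod_apply hWm).symm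
      _ ≤ ε * μ (B j) := hprod2
  -- the sets T N are null
  set T : ℕ → Set H := fun N => {h | h ∈ A ∧ ∀ j, N ≤ j → μ (B j) / 2 ≤ μ ((h • B j) ∩ E)}
    with hTdef
  have hT : ∀ N, μ (T N) = 0 := by
    intro N
    refine le_antisymm (ENNReal.le_of_forall_pos_le_add fun ε hε _ => ?_) zero_le
    rw [zero_add]
    have hε2 : (0 : ℝ≥0∞) < (ε : ℝ≥0∞) / 2 :=
      ENNReal.div_pos (by exact_mod_cast hε.ne') (by norm_num)
    have hev : ∀ᶠ g in 𝓝 (1 : H), μ (((· * g) ⁻¹' E) ∆ E) ≤ (ε : ℝ≥0∞) / 2 :=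
      ENNReal.tendsto_nhds_zero.mp contR _ hε2
    obtain ⟨j0, hj0⟩ := hBsub _ hev
    set j := max j0 N with hj
    have hjb : ∀ b ∈ B j, μ (((· * b) ⁻¹' E) ∆ E) ≤ (ε : ℝ≥0∞) / 2 :=
      fun b hb => hj0 j (le_max_left _ _) hb
    have h1 := hmain j ((ε : ℝ≥0∞) / 2) hjb
    have hTsub : T N ⊆ {h | h ∈ A ∧ μ (B j) / 2 ≤ μ ((h • B j) ∩ E)} :=
      fun h hh => ⟨hh.1, hh.2 j (le_max_right _ _)⟩
    have h2 : μ (B j) / 2 * μ (T N) ≤ μ (B j) / 2 * ((ε : ℝ≥0∞)) := by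
      calc μ (B j) / 2 * μ (T N)
          ≤ μ (B j) / 2 * μ {h | h ∈ A ∧ μ (B j) / 2 ≤ μ ((h • B j) ∩ E)} :=
            mul_le_mul_right (measure_mono hTsub) _
        _ ≤ (ε : ℝ≥0∞) / 2 * μ (B j) := h1
        _ = μ (B j) / 2 * ε := by
            simp only [div_eq_mul_inv]
            ring
      

    have hne : μ (B j) / 2 ≠ 0 := by
      simp only [ne_eq, ENNReal.div_eq_zero_iff]
      push_neg
      exact ⟨(hBpos j).ne', by norm_num⟩
    have hnt : μ (B j) / 2 ≠ ⊤ := (ENNReal.div_lt_top (measure_ne_top μ _) (by norm_num)).ne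
    exact (ENNReal.mul_le_mul_iff_right hne hnt).mp h2
  -- cover S by the T N
  have hScover : S ⊆ ⋃ N, T N := by
    intro h hh
    obtain ⟨l, hlL, s, hsD, rfl⟩ := hh.1
    obtain ⟨N, hN⟩ := (eventually_atTop).mp (hlow s hsD l hlL)
    exact mem_iUnion.mpr ⟨N, hSA hh, fun j hj => hN j hj⟩
  have hSnull : μ S = 0 :=
    measure_mono_null hScover (measure_iUnion_null fun N => hT N)
  -- conclusion
  have hle : μ ((L : Set H) * D) ≤ μ Q := by
    calc μ ((L : Set H) * D) ≤ μ (E ∪ S) := measure_mono fun x hx => by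
          by_cases hxE : x ∈ E
          exacts [Or.inl hxE, Or.inr ⟨hx, hxE⟩]
      _ ≤ μ E + μ S := measure_union_le _ _
      _ = μ Q := by rw [hSnull, add_zero, hμE]
  exact le_antisymm (measure_mono (Set.mul_subset_mul_right hΓL)) hle
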